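/- Let (q_α, h_α) and (q_β, h_β) be differentiable maps ℝ → ℝ³, and let k₁^α, k₁^β : ℝ → ℝ be functions with k₁^α never zero, satisfying q_α'(t) = k₁^α(t)·h_α(t) and q_β'(s) = k₁^β(s)·h_β(s) for all t, s. Let φ : ℝ → ℝ be differentiable with φ'(s) = k₁^β(s)/k₁^α(φ(s)) for all s. If the central normals agree, h_α(φ(s)) = h_β(s) for all s, and the rulings agree at one point, q_α(φ(s₀)) = q_β(s₀) for some s₀, then the rulings agree everywhere: q_α(φ(s)) = q_β(s) for all s, i.e. the two ruled surfaces are similar under the variable transformation φ. -/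

import Mathlib

open Real

/-- If the central normals of two ruled surfaces agree under a variable transformation φ
with `φ' = k₁^β / (k₁^α ∘ φ)`, and the rulings agree at one point, then the rulings agree
everywhere: the surfaces are similar ruled surfaces under φ. -/
theorem central_normals_agree_implies_similar
    (qα hα qβ hβ : ℝ → EuclideanSpace ℝ (Fin 3)) (k₁α k₁β : ℝ → ℝ)
    (hqα : Differentiable ℝ qα) (hhα : Differentiable ℝ hα)
    (hqβ : Differentiable ℝ qβ) (hhβ : Differentiable ℝ hβ)
    (hk₁α : ∀ t, k₁α t ≠ 0)
    (hqα' : ∀ t, deriv qα t = k₁α t • hα t)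
    (hqβ' : ∀ s, deriv qβ s = k₁β s • hβ s)
    (φ : ℝ → ℝ) (hφ : Differentiable ℝ φ)
    (hφ' : ∀ s, deriv φ s = k₁β s / k₁α (φ s))
    (hnormals : ∀ s, hα (φ s) = hβ s)
    (s₀ : ℝ) (h₀ : qα (φ s₀) = qβ s₀) :
    ∀ s, qα (φ s) = qβ s := by
  have key : ∀ s, HasDerivAt (fun s => qα (φ s) - qβ s) 0 s := by
    intro s
    have h1 : HasDerivAt qα (k₁α (φ s) • hα (φ s)) (φ s) := by
      have := (hqα (φ s)).hasDerivAt
      rwa [hqα' (φ s)] at this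
    have h2 : HasDerivAt φ (k₁β s / k₁α (φ s)) s := by
      have := (hφ s).hasDerivAt
      rwa [hφ' s] at this
    have h3 : HasDerivAt (fun s => qα (φ s))
        ((k₁β s / k₁α (φ s)) • (k₁α (φ s) • hα (φ s))) s := h1.scomp s h2
    have h4 : HasDerivAt qβ (k₁β s • hβ s) s := by
      have := (hqβ s).hasDerivAt
      rwa [hqβ' s] at this
    have heq : (k₁β s / k₁α (φ s)) • (k₁α (φ s) • hα (φ s)) = k₁β s • hβ s := by
      rw [smul_smul, div_mul_cancel₀ _ (hk₁α (φ s)), hnormals s]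
    rw [heq] at h3
    have h5 := h3.sub h4
    rw [sub_self] at h5
    exact h5
  have hconst : ∀ s, (fun s => qα (φ s) - qβ s) s = (fun s => qα (φ s) - qβ s) s₀ :=
    fun s => is_const_of_deriv_eq_zero (fun t => (key t).differentiableAt)
      (fun t => (key t).deriv) s s₀
  intro s
  have := hconst s
  simp only at this
  rw [h₀, sub_self] at this
  exact sub_eq_zero.mp this
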